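/- Let p be a prime, F a free group, F_H a normal subgroup of F of index p^n for some n, and r ∈ F_H a non-identity element. Write r = w^{p^{e_p(r,F)}} with w ∈ F (w the p^{e_p(r,F)}-th root of r in F). Then e_p(r,F_H) ≤ e_p(r,F) and the index of ⟨w⟩ ∩ F_H in the cyclic group ⟨w⟩ equals p^{e_p(r,F) − e_p(r,F_H)}. -/

import Mathlib

namespace FGaux
open FreeGroup List

variable {α : Type*} [DecidableEq α]
set_option linter.unusedSectionVars false

/-- A word is reduced if no two adjacent letters are inverse to each other. -/
abbrev IsRed (L : List (α × Bool)) : Prop :=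
  List.IsChain (fun a b => b ≠ (a.1, !a.2)) L

theorem isRed_reduce (L : List (α × Bool)) : IsRed (reduce L) := by
  induction L with
  | nil => simp [IsRed]
  | cons x L ih =>
    rw [FreeGroup.reduce.cons]
    rcases h : reduce L with _ | ⟨hd, tl⟩
    · simp [IsRed]
    · rw [h] at ih
      by_cases hc : x.1 = hd.1 ∧ x.2 = !hd.2
      · simp only [hc, if_true]
        exact ih.tail
      · simp only [hc, if_false]
        refine List.IsChain.cons_cons ?_ ih
        rintro rfl
        exact hc ⟨rfl, by simp⟩

theorem IsRed.no_step {L L' : List (α × Bool)} (h : IsRed L) : ¬ Red.Step L L' := by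
  intro hs
  cases hs with
  | @not L₁ L₂ x b =>
    unfold IsRed at h
    rw [List.isChain_append] at h
    obtain ⟨-, h2, -⟩ := h
    exact (List.isChain_cons_cons.mp h2).1 rfl

theorem IsRed.reduce_eq {L : List (α × Bool)} (h : IsRed L) : reduce L = L := by
  have hred : Red L (reduce L) := FreeGroup.reduce.red
  rcases Relation.ReflTransGen.cases_head hred with h' | ⟨M, hs, -⟩
  · exact h'.symm
  · exact absurd hs h.no_step

theorem IsRed.toWord_mk {L : List (α × Bool)} (h : IsRed L) : (FreeGroup.mk L).toWord = L := by
  rw [FreeGroup.toWord_mk, h.reduce_eq]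

theorem isRed_toWord (x : FreeGroup α) : IsRed x.toWord := by
  rw [← FreeGroup.reduce_toWord]
  exact isRed_reduce _

theorem invRev_cons (b : α × Bool) (L : List (α × Bool)) :
    FreeGroup.invRev (b :: L) = FreeGroup.invRev L ++ [(b.1, !b.2)] := by
  simp [FreeGroup.invRev]

theorem invRev_append' (L₁ L₂ : List (α × Bool)) :
    FreeGroup.invRev (L₁ ++ L₂) = FreeGroup.invRev L₂ ++ FreeGroup.invRev L₁ := by
  simp [FreeGroup.invRev]

theorem head?_invRev (L : List (α × Bool)) :
    (FreeGroup.invRev L).head? = L.getLast?.map (fun a => (a.1, !a.2)) := by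
  simp [FreeGroup.invRev, List.head?_reverse, List.getLast?_map]

theorem getLast?_invRev (L : List (α × Bool)) :
    (FreeGroup.invRev L).getLast? = L.head?.map (fun a => (a.1, !a.2)) := by
  simp [FreeGroup.invRev, List.getLast?_reverse, List.head?_map]

/-- A word is cyclically reduced at the seam if its first letter is not the
inverse of its last letter. -/
abbrev CycOk (A : List (α × Bool)) : Prop :=
  ∀ a ∈ A.getLast?, ∀ b ∈ A.head?, b ≠ (a.1, !a.2)

theorem flatten_replicate (A : List (α × Bool)) (hA : A ≠ []) (hR : IsRed A)
    (hC : CycOk A) : ∀ n, 0 < n →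
    IsRed ((List.replicate n A).flatten) ∧
    ((List.replicate n A).flatten).head? = A.head? ∧
    ((List.replicate n A).flatten).getLast? = A.getLast? := by
  intro n hn
  induction n with
  | zero => omega
  | succ n ih =>
    rcases Nat.eq_zero_or_pos n with rfl | hn'
    · refine ⟨?_, by simp, by simp⟩
      simpa [IsRed] using hR
    · obtain ⟨ih1, ih2, ih3⟩ := ih hn'
      have hfl : (List.replicate n A).flatten ≠ [] := by
        intro h
        rw [h] at ih2
        simp only [List.head?_nil] at ih2
        exact hA (List.head?_eq_none_iff.mp ih2.symm)
      rw [List.replicate_succ, List.flatten_cons]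
      refine ⟨?_, ?_, ?_⟩
      · rw [IsRed, List.isChain_append]
        refine ⟨hR, ih1, ?_⟩
        intro a ha b hb
        rw [ih2] at hb
        exact hC a ha b hb
      · rw [List.head?_append_of_ne_nil _ hA]
      · rw [List.getLast?_append_of_ne_nil _ hfl, ih3]

theorem exists_cyc (x : FreeGroup α) (hx : x ≠ 1) :
    ∃ C A : List (α × Bool), A ≠ [] ∧ CycOk A ∧
      x.toWord = C ++ A ++ FreeGroup.invRev C := by
  generalize hN : x.toWord.length = N
  induction N using Nat.strong_induction_on generalizing x with
  | _ N ih =>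
    have hred : IsRed x.toWord := isRed_toWord x
    have hLne : x.toWord ≠ [] := fun h => hx (FreeGroup.toWord_eq_nil_iff.mp h)
    by_cases hcyc : CycOk x.toWord
    · exact ⟨[], x.toWord, hLne, hcyc, by simp⟩
    · rw [CycOk] at hcyc
      push_neg at hcyc
      obtain ⟨a, ha, b, hb, hab⟩ := hcyc
      rcases hLdef : x.toWord with _ | ⟨b', T⟩
      · exact absurd hLdef hLne
      rcases List.eq_nil_or_concat T with rfl | ⟨M, a', rfl⟩
      · -- singleton: impossible
        rw [hLdef] at ha hb
        have h1 : b' = a := by simpa using ha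
        have h2 : b' = b := by simpa using hb
        rw [← h1, ← h2] at hab
        have := congrArg Prod.snd hab
        simp at this
      · rw [List.concat_eq_append] at hLdef
        rw [hLdef] at ha hb hred hN
        rw [List.concat_eq_append]
        have hbb : b' = b := by simpa using hb
        have haa : a' = a := by
          have h5 : (b' :: (M ++ [a'])).getLast? = some a' := by
            rw [show b' :: (M ++ [a']) = (b' :: M) ++ [a'] from rfl,
              List.getLast?_concat]
          rw [h5] at ha
          simpa using ha
        subst hbb
        subst haa
        have hab2 : a' = (b'.1, !b'.2) := by
          obtain ⟨a1, a2⟩ := a'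
          cases hab
          simp
        have hMred : IsRed M := List.IsChain.infix hred ⟨[b'], [a'], by simp⟩
        set y := FreeGroup.mk M with hy
        have hyW : y.toWord = M := hMred.toWord_mk
        have hMne : M ≠ [] := by
          rintro rfl
          rw [IsRed] at hred
          simp only [List.nil_append, List.isChain_cons_cons, List.isChain_singleton,
            and_true, ne_eq] at hred
          exact hred hab2
        have hyne : y ≠ 1 := by
          intro h
          rw [h] at hyW
          exact hMne (by simpa using hyW.symm)
        have hlen : M.length < N := by
          simp only [List.length_cons, List.length_append, List.length_singleton] at hN
          omega
        obtain ⟨C', A', hA'ne, hA'cyc, hM⟩ := ih M.length hlen y hyne (by rw [hyW])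
        rw [hyW] at hM
        refine ⟨b' :: C', A', hA'ne, hA'cyc, ?_⟩
        rw [invRev_cons, hM, ← hab2]
        simp

theorem toWord_pow_of_decomp {x : FreeGroup α} {C A : List (α × Bool)}
    (hA : A ≠ []) (hcyc : CycOk A) (hxW : x.toWord = C ++ A ++ FreeGroup.invRev C)
    (n : ℕ) (hn : 0 < n) :
    (x ^ n).toWord = C ++ (List.replicate n A).flatten ++ FreeGroup.invRev C := by
  have hred : IsRed (C ++ A ++ FreeGroup.invRev C) := hxW ▸ isRed_toWord x
  have hAred : IsRed A := List.IsChain.infix hred ⟨C, FreeGroup.invRev C, by simp⟩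
  obtain ⟨hAn, hAnh, hAnl⟩ := flatten_replicate A hA hAred hcyc n hn
  set An := (List.replicate n A).flatten with hAndef
  have hAnne : An ≠ [] := by
    intro h
    rw [h] at hAnh
    exact hA (List.head?_eq_none_iff.mp hAnh.symm)
  -- decompose hred
  rw [IsRed, List.isChain_append, List.isChain_append] at hred
  obtain ⟨⟨hC, hA1, hbd1⟩, hIC, hbd2⟩ := hred
  -- the new word is reduced
  have hred' : IsRed (C ++ An ++ FreeGroup.invRev C) := by
    rw [IsRed, List.isChain_append, List.isChain_append]
    refine ⟨⟨hC, hAn, ?_⟩, hIC, ?_⟩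
    · intro a ha b hb
      rw [hAnh] at hb
      exact hbd1 a ha b hb
    · intro a ha b hb
      rw [List.getLast?_append_of_ne_nil _ hAnne, hAnl] at ha
      refine hbd2 a ?_ b hb
      rw [List.getLast?_append_of_ne_nil _ hA]
      exact ha
  -- compute x ^ n
  have hxeq : x = FreeGroup.mk (C ++ A ++ FreeGroup.invRev C) := by
    rw [← hxW, FreeGroup.mk_toWord]
  have hsplit : x = FreeGroup.mk C * FreeGroup.mk A * (FreeGroup.mk C)⁻¹ := by
    rw [hxeq, FreeGroup.inv_mk, FreeGroup.mul_mk, FreeGroup.mul_mk]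
  have hxn : x ^ n = FreeGroup.mk (C ++ An ++ FreeGroup.invRev C) := by
    rw [hsplit, conj_pow, FreeGroup.pow_mk, FreeGroup.inv_mk, FreeGroup.mul_mk,
      FreeGroup.mul_mk]
  rw [hxn, hred'.toWord_mk]

theorem norm_pow_le {x : FreeGroup α} (hx : x ≠ 1) {n : ℕ} (hn : 0 < n) :
    n ≤ FreeGroup.norm (x ^ n) := by
  obtain ⟨C, A, hA, hcyc, hxW⟩ := exists_cyc x hx
  have h := toWord_pow_of_decomp hA hcyc hxW n hn
  have hlen : FreeGroup.norm (x ^ n) = (x ^ n).toWord.length := rfl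
  rw [hlen, h]
  have h1 : 1 ≤ A.length := List.length_pos_iff.mpr hA
  have h2 : ((List.replicate n A).flatten).length = n * A.length := by
    simp [List.length_flatten]
  simp only [List.length_append, h2]
  calc n = n * 1 := (Nat.mul_one n).symm
    _ ≤ n * A.length := Nat.mul_le_mul_left n h1
    _ ≤ _ := by omega

theorem pow_ne_one {x : FreeGroup α} (hx : x ≠ 1) {n : ℕ} (hn : 0 < n) :
    x ^ n ≠ 1 := by
  intro h
  have := norm_pow_le hx hn
  rw [h, FreeGroup.norm_one] at this
  omega

theorem no_conj {Am Bm t : List (α × Bool)} (ht : t ≠ []) (hcyc : CycOk Am)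
    (heq : Am = t ++ Bm ++ FreeGroup.invRev t) : False := by
  have htinv : FreeGroup.invRev t ≠ [] := by
    intro h
    have := congrArg List.length h
    rw [FreeGroup.invRev_length] at this
    exact ht (List.length_eq_zero_iff.mp this)
  obtain ⟨b, hb⟩ : ∃ b, t.head? = some b := by
    rcases t with _ | ⟨b, t⟩
    · exact absurd rfl ht
    · exact ⟨b, rfl⟩
  have hhead : Am.head? = some b := by
    rw [heq, List.append_assoc, List.head?_append_of_ne_nil _ ht, hb]
  have hlast : Am.getLast? = some (b.1, !b.2) := by
    rw [heq, List.getLast?_append_of_ne_nil _ htinv, getLast?_invRev, hb]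
    rfl
  have := hcyc _ hlast b hhead
  simp at this

theorem freeGroup_pow_left_injective {x y : FreeGroup α} {m : ℕ} (hm : 0 < m)
    (h : x ^ m = y ^ m) : x = y := by
  by_cases hx1 : x = 1
  · subst hx1
    rw [one_pow] at h
    by_contra hy
    exact pow_ne_one (fun hy1 => hy hy1.symm) hm h.symm
  have hy1 : y ≠ 1 := by
    rintro rfl
    rw [one_pow] at h
    exact pow_ne_one hx1 hm h
  obtain ⟨C, A, hA, hcA, hxW⟩ := exists_cyc x hx1
  obtain ⟨D, B, hB, hcB, hyW⟩ := exists_cyc y hy1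
  have hAred : IsRed A := List.IsChain.infix (hxW ▸ isRed_toWord x) ⟨C, FreeGroup.invRev C, by simp⟩
  have hBred : IsRed B := List.IsChain.infix (hyW ▸ isRed_toWord y) ⟨D, FreeGroup.invRev D, by simp⟩
  set Am := (List.replicate m A).flatten with hAm
  set Bm := (List.replicate m B).flatten with hBm
  obtain ⟨hAmred, hAmh, hAml⟩ := flatten_replicate A hA hAred hcA m hm
  obtain ⟨hBmred, hBmh, hBml⟩ := flatten_replicate B hB hBred hcB m hm
  rw [← hAm] at hAmh hAml
  rw [← hBm] at hBmh hBml
  have hAmne : Am ≠ [] := by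
    intro hh; rw [hh] at hAmh; exact hA (List.head?_eq_none_iff.mp hAmh.symm)
  have hBmne : Bm ≠ [] := by
    intro hh; rw [hh] at hBmh; exact hB (List.head?_eq_none_iff.mp hBmh.symm)
  have hAmcyc : CycOk Am := by
    intro a ha b hb
    rw [hAml] at ha
    rw [hAmh] at hb
    exact hcA a ha b hb
  have hBmcyc : CycOk Bm := by
    intro a ha b hb
    rw [hBml] at ha
    rw [hBmh] at hb
    exact hcB a ha b hb
  have heq : C ++ Am ++ FreeGroup.invRev C = D ++ Bm ++ FreeGroup.invRev D := by
    rw [← toWord_pow_of_decomp hA hcA hxW m hm, ← toWord_pow_of_decomp hB hcB hyW m hm, h]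
  -- key symmetry lemma
  have key : ∀ (C D Am Bm : List (α × Bool)), CycOk Am →
      C ++ Am ++ FreeGroup.invRev C = D ++ Bm ++ FreeGroup.invRev D →
      ¬ C.length < D.length := by
    clear heq hAmcyc hBmcyc hAmne hBmne hxW hyW hAml hAmh hBml hBmh hAm hBm
      hAmred hBmred h
    intro C D Am Bm hAmcyc heq hlt
    have hCpre : C <+: D ++ Bm ++ FreeGroup.invRev D := by
      rw [← heq, List.append_assoc]
      exact List.prefix_append _ _
    have hDpre : D <+: D ++ Bm ++ FreeGroup.invRev D := by
      rw [List.append_assoc]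
      exact List.prefix_append _ _
    have hCD : C <+: D := List.prefix_of_prefix_length_le hCpre hDpre (le_of_lt hlt)
    obtain ⟨t, rfl⟩ := hCD
    have ht : t ≠ [] := by
      rintro rfl
      simp at hlt
    rw [invRev_append'] at heq
    have heq2 : Am = t ++ Bm ++ FreeGroup.invRev t := by
      have h1 : C ++ (Am ++ FreeGroup.invRev C) =
          C ++ (t ++ (Bm ++ (FreeGroup.invRev t ++ FreeGroup.invRev C))) := by
        simpa [List.append_assoc] using heq
      have h2 := List.append_cancel_left h1
      have h3 : Am ++ FreeGroup.invRev C =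
          (t ++ Bm ++ FreeGroup.invRev t) ++ FreeGroup.invRev C := by
        simpa [List.append_assoc] using h2
      exact List.append_cancel_right h3
    exact no_conj ht hAmcyc heq2
  have hlen : C.length = D.length := by
    rcases Nat.lt_trichotomy C.length D.length with h' | h' | h'
    · exact absurd h' (key C D Am Bm hAmcyc heq)
    · exact h'
    · exact absurd h' (key D C Bm Am hBmcyc heq.symm)
  -- C = D
  have hCD : C = D := by
    have hCpre : C <+: D ++ Bm ++ FreeGroup.invRev D := by
      rw [← heq, List.append_assoc]
      exact List.prefix_append _ _
    have hDpre : D <+: D ++ Bm ++ FreeGroup.invRev D := by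
      rw [List.append_assoc]
      exact List.prefix_append _ _
    exact (List.prefix_of_prefix_length_le hCpre hDpre (le_of_eq hlen)).eq_of_length hlen
  subst hCD
  have hAmBm : Am = Bm := by
    have h1 : C ++ (Am ++ FreeGroup.invRev C) = C ++ (Bm ++ FreeGroup.invRev C) := by
      simpa [List.append_assoc] using heq
    exact List.append_cancel_right (List.append_cancel_left h1)
  have hABlen : A.length = B.length := by
    have h1 : Am.length = m * A.length := by simp [hAm, List.length_flatten]
    have h2 : Bm.length = m * B.length := by simp [hBm, List.length_flatten]
    rw [hAmBm, h2] at h1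
    exact (Nat.eq_of_mul_eq_mul_left hm h1.symm)
  have hAB : A = B := by
    have hApre : A <+: Am := by
      rw [hAm, show m = (m - 1) + 1 by omega, List.replicate_succ, List.flatten_cons]
      exact List.prefix_append _ _
    have hBpre : B <+: Am := by
      rw [hAmBm, hBm, show m = (m - 1) + 1 by omega, List.replicate_succ, List.flatten_cons]
      exact List.prefix_append _ _
    exact (List.prefix_of_prefix_length_le hApre hBpre (le_of_eq hABlen)).eq_of_length hABlen
  subst hAB
  rw [← FreeGroup.mk_toWord (x := x), ← FreeGroup.mk_toWord (x := y), hxW, hyW]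

end FGaux

/-- `epIn p S w`: the largest natural number `e` such that `w` has a `p^e`-th root
belonging to the subgroup `S` of the free group.  For `S = ⊤` this is `e_p(w, F)`. -/
noncomputable def epIn {X : Type*} (p : ℕ) (S : Subgroup (FreeGroup X)) (w : FreeGroup X) : ℕ :=
  sSup {e : ℕ | ∃ v ∈ S, v ^ p ^ e = w}

/-- Let `p` be a prime, `F` a free group, `F_H ⊴ F` of index `pⁿ`, and `r ∈ F_H` a
non-identity element, `r = w^{p^{e_p(r,F)}}`.  Then `e_p(r,F_H) ≤ e_p(r,F)` and the index
of `⟨w⟩ ∩ F_H` in `⟨w⟩` equals `p^{e_p(r,F) - e_p(r,F_H)}`. -/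
theorem stmt10 (p : ℕ) (hp : p.Prime) (X : Type)
    (FH : Subgroup (FreeGroup X)) (hFHnorm : FH.Normal)
    (n : ℕ) (hidx : FH.index = p ^ n)
    (r : FreeGroup X) (hr : r ≠ 1) (hrFH : r ∈ FH)
    (w : FreeGroup X) (hw : w ^ p ^ epIn p ⊤ r = r) :
    epIn p FH r ≤ epIn p ⊤ r ∧
      FH.relIndex (Subgroup.zpowers w) = p ^ (epIn p ⊤ r - epIn p FH r) := by
  classical
  have hp1 : 1 < p := hp.one_lt
  -- basic facts about the two sets
  set Stop := {e : ℕ | ∃ v ∈ (⊤ : Subgroup (FreeGroup X)), v ^ p ^ e = r} with hStop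
  set SFH := {e : ℕ | ∃ v ∈ FH, v ^ p ^ e = r} with hSFH
  have hsub : SFH ⊆ Stop := fun e ⟨v, _, hv⟩ => ⟨v, trivial, hv⟩
  have hbddtop : BddAbove Stop := by
    refine ⟨FreeGroup.norm r, fun e he => ?_⟩
    obtain ⟨v, -, hv⟩ := he
    have hvne : v ≠ 1 := by
      rintro rfl
      rw [one_pow] at hv
      exact hr hv.symm
    have h1 : p ^ e ≤ FreeGroup.norm (v ^ p ^ e) :=
      FGaux.norm_pow_le hvne (pow_pos (by omega) e)
    rw [hv] at h1
    have h2 : e < p ^ e := Nat.lt_pow_self hp1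
    omega
  have hbddFH : BddAbove SFH := hbddtop.mono hsub
  have h0top : (0 : ℕ) ∈ Stop := ⟨r, trivial, by rw [pow_zero, pow_one]⟩
  have h0FH : (0 : ℕ) ∈ SFH := ⟨r, hrFH, by rw [pow_zero, pow_one]⟩
  have hfe : epIn p FH r ≤ epIn p ⊤ r := csSup_le_csSup hbddtop ⟨0, h0FH⟩ hsub
  set e := epIn p ⊤ r with he
  set f := epIn p FH r with hf
  have hfmem : f ∈ SFH := Nat.sSup_mem ⟨0, h0FH⟩ hbddFH
  -- w is nontrivial of infinite order
  have hwne : w ≠ 1 := by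
    rintro rfl
    rw [one_pow] at hw
    exact hr hw.symm
  have hwpow : ∀ m : ℕ, 0 < m → w ^ m ≠ 1 := fun m hm => FGaux.pow_ne_one hwne hm
  -- the set of positive exponents landing in FH
  set T := {m : ℕ | 0 < m ∧ w ^ m ∈ FH} with hT
  have hTne : (p ^ n : ℕ) ∈ T := by
    refine ⟨pow_pos (by omega) n, ?_⟩
    rw [← hidx]
    exact Subgroup.pow_index_mem FH w
  set m₀ := sInf T with hm₀
  have hm₀mem : m₀ ∈ T := Nat.sInf_mem ⟨_, hTne⟩
  have hm₀pos : 0 < m₀ := hm₀mem.1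
  have hdvd : ∀ m : ℕ, w ^ m ∈ FH ↔ m₀ ∣ m := by
    intro m
    constructor
    · intro hm
      rcases Nat.eq_zero_or_pos m with rfl | hmpos
      · exact dvd_zero _
      have hmod : w ^ (m % m₀) ∈ FH := by
        have : m % m₀ + m₀ * (m / m₀) = m := Nat.mod_add_div m m₀
        have h2 : w ^ m = w ^ (m % m₀) * (w ^ m₀) ^ (m / m₀) := by
          rw [← pow_mul, ← pow_add, this]
        have h3 : (w ^ m₀) ^ (m / m₀) ∈ FH := pow_mem hm₀mem.2 _
        have := mul_mem hm (inv_mem h3)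
        rwa [h2, mul_inv_cancel_right] at this
      by_contra hnd
      have hpos : 0 < m % m₀ := by
        rcases Nat.eq_zero_or_pos (m % m₀) with h' | h'
        · exact absurd (Nat.dvd_of_mod_eq_zero h') hnd
        · exact h'
      have : m % m₀ ∈ T := ⟨hpos, hmod⟩
      have := Nat.sInf_le this
      have hlt : m % m₀ < m₀ := Nat.mod_lt _ hm₀pos
      omega
    · rintro ⟨c, rfl⟩
      rw [pow_mul]
      exact pow_mem hm₀mem.2 _
  -- m₀ = p ^ k
  obtain ⟨k, hkn, hk⟩ := (Nat.dvd_prime_pow hp).mp ((hdvd _).mp hTne.2)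
  -- k ≤ e
  have hke : k ≤ e := by
    have : m₀ ∣ p ^ e := (hdvd _).mp (by rw [hw]; exact hrFH)
    rw [hk] at this
    exact (Nat.pow_dvd_pow_iff_le_right hp1).mp this
  -- e - k ∈ SFH, hence e - k ≤ f
  have hekf : e - k ≤ f := by
    refine le_csSup hbddFH ⟨w ^ p ^ k, ?_, ?_⟩
    · rw [← hk]
      exact hm₀mem.2
    · rw [← pow_mul, ← pow_add, Nat.add_sub_cancel' hke, hw]
  -- f ≤ e - k
  have hfek : f ≤ e - k := by
    obtain ⟨v, hvFH, hv⟩ := hfmem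
    have hveq : v = w ^ p ^ (e - f) := by
      refine FGaux.freeGroup_pow_left_injective (m := p ^ f) (pow_pos (by omega) f) ?_
      rw [hv, ← pow_mul, ← pow_add, Nat.sub_add_cancel hfe, hw]
    have : m₀ ∣ p ^ (e - f) := (hdvd _).mp (hveq ▸ hvFH)
    rw [hk] at this
    have := (Nat.pow_dvd_pow_iff_le_right hp1).mp this
    omega
  have hkef : k = e - f := by omega
  refine ⟨hfe, ?_⟩
  -- compute the relative index
  set φ : Multiplicative ℤ →* FreeGroup X := zpowersHom _ w with hφ
  have hrange : φ.range = Subgroup.zpowers w := by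
    ext z
    simp only [MonoidHom.mem_range, Subgroup.mem_zpowers_iff]
    constructor
    · rintro ⟨m, rfl⟩
      exact ⟨m.toAdd, rfl⟩
    · rintro ⟨m, rfl⟩
      exact ⟨Multiplicative.ofAdd m, rfl⟩
  have hdvdz : ∀ m : ℤ, w ^ m ∈ FH ↔ (m₀ : ℤ) ∣ m := by
    intro m
    rcases Int.natAbs_eq m with hm | hm
    · rw [hm, zpow_natCast, hdvd, Int.natCast_dvd_natCast]
    · rw [hm, zpow_neg, zpow_natCast, inv_mem_iff, hdvd, dvd_neg, Int.natCast_dvd_natCast]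
  have hcomap : FH.comap φ = AddSubgroup.toSubgroup (AddSubgroup.zmultiples (m₀ : ℤ)) := by
    ext z
    rw [Subgroup.mem_comap]
    have h1 : φ z = w ^ z.toAdd := rfl
    rw [h1, hdvdz]
    have h2 : z ∈ AddSubgroup.toSubgroup (AddSubgroup.zmultiples (m₀ : ℤ)) ↔
        z.toAdd ∈ AddSubgroup.zmultiples (m₀ : ℤ) := Iff.rfl
    rw [h2, Int.mem_zmultiples_iff]
  have hindex : FH.relIndex (Subgroup.zpowers w) = m₀ := by
    rw [← hrange, ← Subgroup.index_comap, hcomap,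
      AddSubgroup.index_toSubgroup, Int.index_zmultiples, Int.natAbs_natCast]
  rw [hindex, hk, hkef]
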